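/- For α ∈ [1/2, 1] and any connected graph G, the matrix RD_α(G) = α RT(G) + (1-α)RD(G) is positive semidefinite; consequently S_{RD_α}(G) ≤ λ₁(RD_α(G)), with equality if and only if the smallest eigenvalue of RD_α(G) is 0. -/

import Mathlib

open Matrix BigOperators Finset

variable {V : Type*} [Fintype V] [DecidableEq V]

/-- Reciprocal distance (Harary) matrix. -/
noncomputable def RD (G : SimpleGraph V) : Matrix V V ℝ :=
  Matrix.of fun i j => if i = j then 0 else (1 : ℝ) / (G.dist i j)

/-- Reciprocal transmission of a vertex. -/
noncomputable def RTr (G : SimpleGraph V) (i : V) : ℝ := ∑ j, RD G i j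

/-- Generalized reciprocal distance matrix. -/
noncomputable def RDa (α : ℝ) (G : SimpleGraph V) : Matrix V V ℝ :=
  α • Matrix.diagonal (RTr G) + (1 - α) • RD G

/-- Harary index. -/
noncomputable def harary (G : SimpleGraph V) : ℝ := (∑ i, RTr G i) / 2

/-- Reciprocal transmission regular graph. -/
def TransRegular (G : SimpleGraph V) : Prop := ∀ i j : V, RTr G i = RTr G j

noncomputable def maxEig {M : Matrix V V ℝ} (hM : M.IsHermitian) : ℝ := ⨆ i, hM.eigenvalues i

noncomputable def minEig {M : Matrix V V ℝ} (hM : M.IsHermitian) : ℝ := ⨅ i, hM.eigenvalues i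

/-- Spread of a real symmetric matrix. -/
noncomputable def spread {M : Matrix V V ℝ} (hM : M.IsHermitian) : ℝ := maxEig hM - minEig hM

lemma RD_nonneg (G : SimpleGraph V) (i j : V) : 0 ≤ RD G i j := by
  unfold RD
  simp only [Matrix.of_apply]
  split
  · exact le_refl 0
  · positivity

lemma RD_symm (G : SimpleGraph V) (i j : V) : RD G i j = RD G j i := by
  unfold RD
  simp only [Matrix.of_apply]
  by_cases h : i = j
  · subst h; simp
  · rw [if_neg h, if_neg (Ne.symm h), SimpleGraph.dist_comm]

lemma RDa_mulVec (G : SimpleGraph V) (α : ℝ) (x : V → ℝ) (i : V) :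
    (RDa α G).mulVec x i = α * RTr G i * x i + (1 - α) * ∑ j, RD G i j * x j := by
  simp [RDa, Matrix.mulVec, dotProduct, Matrix.add_apply, Matrix.smul_apply,
    Matrix.diagonal_apply, add_mul, Finset.sum_add_distrib, ite_mul, mul_ite,
    Finset.mul_sum, mul_assoc]

lemma quad_eq (G : SimpleGraph V) (α : ℝ) (x : V → ℝ) :
    x ⬝ᵥ (RDa α G).mulVec x
      = ∑ i, ∑ j, RD G i j * (α / 2 * x i ^ 2 + α / 2 * x j ^ 2 + (1 - α) * (x i * x j)) := by
  have hS : (∑ i, ∑ j, RD G i j * x i ^ 2) = ∑ i, ∑ j, RD G i j * x j ^ 2 := by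
    rw [Finset.sum_comm]
    exact Finset.sum_congr rfl fun i _ => Finset.sum_congr rfl fun j _ => by
      rw [RD_symm]
  have hL : x ⬝ᵥ (RDa α G).mulVec x
      = α * (∑ i, ∑ j, RD G i j * x i ^ 2)
        + (1 - α) * (∑ i, ∑ j, RD G i j * (x i * x j)) := by
    simp only [dotProduct]
    rw [Finset.mul_sum, Finset.mul_sum, ← Finset.sum_add_distrib]
    refine Finset.sum_congr rfl fun i _ => ?_
    rw [RDa_mulVec, RTr]
    simp only [mul_add, Finset.mul_sum, Finset.sum_mul]
    congr 1 <;> exact Finset.sum_congr rfl fun j _ => by ring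
  rw [hL]
  have hR : (∑ i, ∑ j, RD G i j * (α / 2 * x i ^ 2 + α / 2 * x j ^ 2 + (1 - α) * (x i * x j)))
      = α / 2 * (∑ i, ∑ j, RD G i j * x i ^ 2)
        + α / 2 * (∑ i, ∑ j, RD G i j * x j ^ 2)
        + (1 - α) * (∑ i, ∑ j, RD G i j * (x i * x j)) := by
    rw [Finset.mul_sum, Finset.mul_sum, Finset.mul_sum, ← Finset.sum_add_distrib,
      ← Finset.sum_add_distrib]
    refine Finset.sum_congr rfl fun i _ => ?_
    rw [Finset.mul_sum, Finset.mul_sum, Finset.mul_sum, ← Finset.sum_add_distrib,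
      ← Finset.sum_add_distrib]
    exact Finset.sum_congr rfl fun j _ => by ring
  rw [hR, ← hS]
  ring

lemma RDa_posSemidef (G : SimpleGraph V) (α : ℝ) (hα : α ∈ Set.Icc (1 / 2 : ℝ) 1)
    (hH : (RDa α G).IsHermitian) : (RDa α G).PosSemidef := by
  refine Matrix.PosSemidef.of_dotProduct_mulVec_nonneg hH fun x => ?_
  have h := quad_eq G α x
  have hnn : 0 ≤ x ⬝ᵥ (RDa α G).mulVec x := by
    rw [h]
    refine Finset.sum_nonneg fun i _ => Finset.sum_nonneg fun j _ => ?_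
    refine mul_nonneg (RD_nonneg G i j) ?_
    nlinarith [sq_nonneg (x i + x j), sq_nonneg (x i - x j), hα.1, hα.2]
  simpa using hnn

/-- For `α ∈ [1/2, 1]`, `RD_α(G)` is positive semidefinite, hence the `RD_α`-spread is at most
the largest eigenvalue, with equality iff the smallest eigenvalue is `0`. -/
theorem RDa_posSemidef_and_spread_le {n : ℕ} (hn : 0 < n) (G : SimpleGraph (Fin n))
    (hG : G.Connected) (α : ℝ) (hα : α ∈ Set.Icc (1 / 2 : ℝ) 1)
    (hH : (RDa α G).IsHermitian) :
    (RDa α G).PosSemidef ∧ spread hH ≤ maxEig hH ∧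
    (spread hH = maxEig hH ↔ minEig hH = 0) := by
  have hPSD : (RDa α G).PosSemidef := RDa_posSemidef G α hα hH
  have hev : ∀ i, 0 ≤ hH.eigenvalues i := fun i => by
    have := hPSD.eigenvalues_nonneg i
    convert this using 2
  have hmin : 0 ≤ minEig hH := Real.iInf_nonneg hev
  refine ⟨hPSD, ?_, ?_⟩
  · unfold spread; linarith
  · unfold spread; constructor
    · intro h; linarith
    · intro h; rw [h]; ring
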